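/- For every infinite cardinal σ there exists a one-to-one function h : [σ⁺]² → σ⁺ such that for every X ⊆ σ⁺ of cardinality σ⁺ and every j < σ, there exist j₁ with j < j₁ < σ and distinct i₀, i₁ ∈ X such that h({i₀,i₁}) ≡ j₁ (mod σ), i.e., h({i₀,i₁}) = σ·α + j₁ for some ordinal α. -/

import Mathlib

open Cardinal

/-- For every infinite cardinal σ there is a one-to-one h : [σ⁺]² → σ⁺ such that for every
X ⊆ σ⁺ of cardinality σ⁺ and every j < σ there are j₁ ∈ (j, σ) and distinct i₀, i₁ ∈ X
with h({i₀,i₁}) ≡ j₁ (mod σ). -/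
theorem exists_injective_pair_coloring_mod (σ : Cardinal.{0}) (hσ : ℵ₀ ≤ σ) :
    ∃ h : (Order.succ σ).ord.ToType → (Order.succ σ).ord.ToType → Ordinal,
      (∀ i j, h i j = h j i) ∧
      (∀ i j, h i j < (Order.succ σ).ord) ∧
      (∀ i j k l, i ≠ j → k ≠ l → h i j = h k l →
        ({i, j} : Set (Order.succ σ).ord.ToType) = {k, l}) ∧
      ∀ X : Set (Order.succ σ).ord.ToType, #X = Order.succ σ →
        ∀ j < σ.ord, ∃ j₁, j < j₁ ∧ j₁ < σ.ord ∧
          ∃ i₀ ∈ X, ∃ i₁ ∈ X, i₀ ≠ i₁ ∧ h i₀ i₁ % σ.ord = j₁ := by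
  classical
  have hκ : ℵ₀ ≤ Order.succ σ := hσ.trans (Order.le_succ σ)
  set κ := Order.succ σ with hκdef
  set τ := κ.ord.ToType with hτdef
  letI iwoτ : IsWellOrder τ (· < ·) := isWellOrder_lt
  letI iwoσ : IsWellOrder σ.ord.ToType (· < ·) := isWellOrder_lt
  have hσ0 : σ.ord ≠ 0 := (Cardinal.isSuccLimit_ord hσ).pos.ne'
  have hmkτ : #τ = κ := by rw [hτdef, Cardinal.mk_toType, Cardinal.card_ord]
  have hττ : #(τ × τ) ≤ #τ := by
    rw [Cardinal.mk_prod]; simp only [Cardinal.lift_id]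
    rw [hmkτ, Cardinal.mul_eq_self hκ]
  obtain ⟨π⟩ := (Cardinal.le_def _ _).mp hττ
  have htypeτ : Ordinal.type ((· < ·) : τ → τ → Prop) = κ.ord := Ordinal.type_toType _
  have htypeσ : Ordinal.type ((· < ·) : σ.ord.ToType → σ.ord.ToType → Prop) = σ.ord :=
    Ordinal.type_toType _
  -- small initial segments
  have hIio : ∀ b : τ, #{a : τ // a < b} ≤ #σ.ord.ToType := by
    intro b
    rw [Cardinal.mk_toType, Cardinal.card_ord]
    have h1 : Ordinal.typein (α := τ) (· < ·) b < κ.ord :=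
      (Ordinal.typein_lt_type _ b).trans_eq htypeτ
    have h2 : (Ordinal.typein (α := τ) (· < ·) b).card < κ := Cardinal.lt_ord.mp h1
    rw [show #{a : τ // a < b} = (Ordinal.typein (α := τ) (· < ·) b).card from
      Ordinal.card_typein b]
    exact Order.lt_succ_iff.mp h2
  have emb : ∀ b : τ, {a : τ // a < b} ↪ σ.ord.ToType :=
    fun b => Classical.choice ((Cardinal.le_def _ _).mp (hIio b))
  set f : τ → τ → Ordinal := fun a b =>
    if h : a < b then Ordinal.typein (· < ·) (emb b ⟨a, h⟩) else 0 with hfdef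
  have hflt : ∀ a b : τ, a < b → f a b < σ.ord := by
    intro a b h
    simp only [hfdef, dif_pos h]
    exact (Ordinal.typein_lt_type _ _).trans_eq htypeσ
  set g : τ → τ → Ordinal := fun a b => Ordinal.typein (α := τ) (· < ·) (π (a, b)) with hgdef
  have hglt : ∀ a b : τ, g a b < κ.ord := by
    intro a b
    exact (Ordinal.typein_lt_type _ _).trans_eq htypeτ
  set H : τ → τ → Ordinal := fun a b =>
    if a = b then 0 else σ.ord * g (min a b) (max a b) + f (min a b) (max a b) with hHdef
  -- symmetry
  have hsymm : ∀ a b : τ, H a b = H b a := by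
    intro a b
    rcases eq_or_ne a b with rfl | hab
    · rfl
    · simp only [hHdef, if_neg hab, if_neg hab.symm, min_comm, max_comm]
      rw [min_comm a b, max_comm a b]
  -- bound
  have hbound : ∀ a b : τ, H a b < κ.ord := by
    intro a b
    rcases eq_or_ne a b with rfl | hab
    · simp only [hHdef, if_pos rfl]
      exact (Cardinal.isSuccLimit_ord hκ).pos
    · simp only [hHdef, if_neg hab]
      rw [Cardinal.lt_ord, Ordinal.card_add, Ordinal.card_mul, Cardinal.card_ord]
      apply Cardinal.add_lt_of_lt hκ
      · exact Cardinal.mul_lt_of_lt hκ (Order.lt_succ σ) (Cardinal.lt_ord.mp (hglt _ _))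
      · exact (Cardinal.lt_ord.mp ((hflt _ _ (min_lt_max.mpr hab)).trans_le
          (Cardinal.ord_le_ord.mpr (Order.le_succ σ))))
  -- pair equality helper
  have hpair : ∀ x y : τ, ({x, y} : Set τ) = {min x y, max x y} := by
    intro x y
    rcases le_total x y with h | h
    · rw [min_eq_left h, max_eq_right h]
    · rw [min_eq_right h, max_eq_left h, Set.pair_comm]
  have hinj : ∀ i j k l : τ, i ≠ j → k ≠ l → H i j = H k l → ({i, j} : Set τ) = {k, l} := by
    intro i j k l hij hkl he
    simp only [hHdef, if_neg hij, if_neg hkl] at he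
    have hg : g (min i j) (max i j) = g (min k l) (max k l) := by
      have h5 := congrArg (· / σ.ord) he
      simpa only [Ordinal.mul_add_div _ hσ0,
        Ordinal.div_eq_zero_of_lt (hflt _ _ (min_lt_max.mpr hij)),
        Ordinal.div_eq_zero_of_lt (hflt _ _ (min_lt_max.mpr hkl)), add_zero] using h5
    have hππ : π (min i j, max i j) = π (min k l, max k l) :=
      Ordinal.typein_injective _ hg
    have h6 := π.injective hππ
    rw [Prod.mk.injEq] at h6
    rw [hpair i j, hpair k l, h6.1, h6.2]
  -- final property
  have hfinal : ∀ X : Set τ, #X = κ → ∀ j < σ.ord, ∃ j₁, j < j₁ ∧ j₁ < σ.ord ∧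
      ∃ i₀ ∈ X, ∃ i₁ ∈ X, i₀ ≠ i₁ ∧ H i₀ i₁ % σ.ord = j₁ := by
    intro X hX j hj
    letI iwoX : IsWellOrder ↥X (· < ·) := isWellOrder_lt
    have htX : κ.ord ≤ Ordinal.type ((· < ·) : ↥X → ↥X → Prop) := by
      rw [Cardinal.ord_le, Ordinal.card_type, hX]
    have hσt : σ.ord < Ordinal.type ((· < ·) : ↥X → ↥X → Prop) :=
      lt_of_lt_of_le (Cardinal.ord_lt_ord.mpr (Order.lt_succ σ)) htX
    set b := Ordinal.enum (α := ↥X) (· < ·) ⟨σ.ord, hσt⟩ with hbdef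
    have hcard1 : #{a : ↥X // a < b} = σ := by
      rw [show #{a : ↥X // a < b} = (Ordinal.typein (α := ↥X) (· < ·) b).card from
        Ordinal.card_typein b, hbdef, Ordinal.typein_enum, Cardinal.card_ord]
    have hj1 : j + 1 < σ.ord := (Cardinal.isSuccLimit_ord hσ).add_one_lt hj
    have hex : ∃ a : ↥X, a < b ∧ j < f a.1 b.1 := by
      by_contra hcon
      push_neg at hcon
      set c := Ordinal.enum (α := σ.ord.ToType) (· < ·)
        ⟨j + 1, hj1.trans_eq htypeσ.symm⟩ with hcdef
      have hcc : ∀ x : σ.ord.ToType, Ordinal.typein (· < ·) x ≤ j ↔ x < c := by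
        intro x
        rw [← Ordinal.typein_lt_typein (α := σ.ord.ToType) (· < ·), hcdef,
          Ordinal.typein_enum, Ordinal.add_one_eq_succ, Order.lt_succ_iff]
      have hlt' : ∀ a : {a : ↥X // a < b}, (a.1.1 : τ) < b.1 :=
        fun a => Subtype.coe_lt_coe.mpr a.2
      have key : ∀ a : {a : ↥X // a < b}, (emb b.1 ⟨a.1.1, hlt' a⟩ : σ.ord.ToType) < c := by
        intro a
        rw [← hcc]
        have h3 := hcon a.1 a.2
        simpa only [hfdef, dif_pos (hlt' a)] using h3
      have hle : #{a : ↥X // a < b} ≤ #{x : σ.ord.ToType // x < c} := by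
        refine Cardinal.mk_le_of_injective (f := fun a => ⟨_, key a⟩) ?_
        intro a a' hea
        rw [Subtype.ext_iff] at hea
        have := (emb b.1).injective hea
        rw [Subtype.mk.injEq] at this
        exact Subtype.ext (Subtype.ext this)
      have h4 : #{x : σ.ord.ToType // x < c} < σ := by
        rw [show #{x : σ.ord.ToType // x < c}
            = (Ordinal.typein (α := σ.ord.ToType) (· < ·) c).card from
          Ordinal.card_typein c, hcdef, Ordinal.typein_enum]
        exact Cardinal.lt_ord.mp hj1
      rw [hcard1] at hle
      exact absurd hle (not_le.mpr h4)
    obtain ⟨a, hab, hja⟩ := hex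
    have habτ : (a : τ) < (b : τ) := Subtype.coe_lt_coe.mpr hab
    refine ⟨f a.1 b.1, hja, hflt _ _ habτ, a.1, a.2, b.1, b.2, ne_of_lt habτ, ?_⟩
    simp only [hHdef, if_neg (ne_of_lt habτ), min_eq_left habτ.le, max_eq_right habτ.le]
    rw [Ordinal.mul_add_mod_self, Ordinal.mod_eq_of_lt (hflt _ _ habτ)]
  exact ⟨H, hsymm, hbound, hinj, hfinal⟩
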